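/- For every n ≥ 0, viewing F_{n+1}(q) and F_n(q) as formal power series in q (each with constant term 1, hence invertible), the ratio F_{n+1}(q)/F_n(q) agrees with the power series G(q) satisfying G(q)^2 - G(q) - q = 0 with G(0) = 1, up to order q^{n+1}; that is, F_{n+1}(q)/F_n(q) - G(q) ∈ q^{n+1}·ℚ[[q]]. -/

import Mathlib

open PowerSeries

noncomputable def qFibS : ℕ → PowerSeries ℚ
  | 0 => 1
  | 1 => 1
  | n + 2 => qFibS (n + 1) + PowerSeries.X * qFibS n

lemma qFibS_const : ∀ n, PowerSeries.constantCoeff (qFibS n) = 1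
  | 0 => by simp [qFibS]
  | 1 => by simp [qFibS]
  | n + 2 => by
      simp [qFibS, qFibS_const (n + 1)]

lemma qFib_key (G : PowerSeries ℚ)
    (hG0 : PowerSeries.constantCoeff G = 1)
    (hG : G ^ 2 - G - PowerSeries.X = 0) :
    ∀ n : ℕ, (PowerSeries.X : PowerSeries ℚ) ^ (n + 1) ∣ qFibS (n + 1) - G * qFibS n
  | 0 => by
      rw [pow_one, PowerSeries.X_dvd_iff]
      simp [qFibS, hG0]
  | n + 1 => by
      have ih := qFib_key G hG0 hG n
      have hX : (PowerSeries.X : PowerSeries ℚ) = G ^ 2 - G := by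
        linear_combination -hG
      have h1 : qFibS (n + 2) - G * qFibS (n + 1)
          = (1 - G) * (qFibS (n + 1) - G * qFibS n) := by
        show qFibS (n + 1) + PowerSeries.X * qFibS n - G * qFibS (n + 1) = _
        rw [hX]; ring
      rw [h1, pow_succ']
      apply mul_dvd_mul _ ih
      rw [PowerSeries.X_dvd_iff]
      simp [hG0]

theorem qFib_ratio_golden (G : PowerSeries ℚ)
    (hG0 : PowerSeries.constantCoeff G = 1)
    (hG : G ^ 2 - G - PowerSeries.X = 0) (n : ℕ) :
    (PowerSeries.X : PowerSeries ℚ) ^ (n + 1) ∣ qFibS (n + 1) * (qFibS n)⁻¹ - G := by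
  have hu : (qFibS n) * (qFibS n)⁻¹ = 1 := by
    apply PowerSeries.mul_inv_cancel
    rw [qFibS_const]; exact one_ne_zero
  have h : qFibS (n + 1) * (qFibS n)⁻¹ - G
      = (qFibS (n + 1) - G * qFibS n) * (qFibS n)⁻¹ := by
    rw [sub_mul, mul_assoc, hu, mul_one]
  rw [h]
  exact dvd_mul_of_dvd_left (qFib_key G hG0 hG n) ((qFibS n)⁻¹)
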